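/- Let A be an n×n complex matrix such that I − Aᴴ A is positive semidefinite and every eigenvalue of A lies in the open unit disc, and let φ be a finite Blaschke product of degree d with d ≥ n. Then 1 is not an eigenvalue of φ(A)ᴴ φ(A); equivalently, I − φ(A)ᴴ φ(A) is invertible, so the defect index of φ(A) equals n. -/

import Mathlib

open Matrix ComplexOrder
namespace BlaschkeAux
variable {n : ℕ} (A : Matrix (Fin n) (Fin n) ℂ)

noncomputable def q (a : ℂ) : Matrix (Fin n) (Fin n) ℂ := 1 - (starRingEnd ℂ) a • A
noncomputable def c (a : ℂ) : Matrix (Fin n) (Fin n) ℂ := (A - a • 1) * (q A a)⁻¹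

lemma commute_smul_aux (r s r' s' : ℂ) :
    Commute (r • 1 + s • A) (r' • 1 + s' • A) := by
  unfold Commute SemiconjBy
  simp only [add_mul, mul_add, smul_mul_assoc, mul_smul_comm, smul_smul, one_mul, mul_one]
  module

lemma sub_eq_aff (a : ℂ) : A - a • 1 = (-a) • 1 + (1:ℂ) • A := by module
lemma q_eq_aff (a : ℂ) : q A a = (1:ℂ) • 1 + (-(starRingEnd ℂ a)) • A := by
  simp only [q]; module

lemma comm_sub_sub (a b : ℂ) : Commute (A - a • 1) (A - b • 1) := by
  rw [sub_eq_aff, sub_eq_aff]; exact commute_smul_aux A _ _ _ _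

lemma comm_sub_q (a b : ℂ) : Commute (A - a • 1) (q A b) := by
  rw [sub_eq_aff, q_eq_aff]; exact commute_smul_aux A _ _ _ _

lemma comm_q_q (a b : ℂ) : Commute (q A a) (q A b) := by
  rw [q_eq_aff, q_eq_aff]; exact commute_smul_aux A _ _ _ _

end BlaschkeAux

namespace BlaschkeAux
variable {n : ℕ} (A : Matrix (Fin n) (Fin n) ℂ)

lemma isUnit_shift (hA_stable : ∀ μ ∈ spectrum ℂ A, ‖μ‖ < 1) {μ : ℂ} (hμ : 1 ≤ ‖μ‖) :
    IsUnit (μ • (1 : Matrix (Fin n) (Fin n) ℂ) - A) := by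
  have : μ ∉ spectrum ℂ A := fun h => absurd (hA_stable μ h) (not_lt.mpr hμ)
  rw [spectrum.mem_iff, not_not, Algebra.algebraMap_eq_smul_one] at this
  exact this

lemma isUnit_q (hA : ∀ μ ∈ spectrum ℂ A, ‖μ‖ < 1) {a : ℂ} (ha : ‖a‖ < 1) : IsUnit (q A a) := by
  by_cases h0 : (starRingEnd ℂ) a = 0
  · simp [q, h0]
  · have ha0 : a ≠ 0 := fun h => h0 (by simp [h])
    have hb : 1 ≤ ‖((starRingEnd ℂ) a)⁻¹‖ := by
      rw [norm_inv, RCLike.norm_conj]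
      exact (one_le_inv₀ (norm_pos_iff.mpr ha0)).mpr ha.le
    have hu := isUnit_shift A hA hb
    have key : q A a = (starRingEnd ℂ) a • (((starRingEnd ℂ) a)⁻¹ • (1 : Matrix (Fin n) (Fin n) ℂ) - A) := by
      rw [smul_sub, smul_smul, mul_inv_cancel₀ h0, one_smul]; rfl
    rw [key, Matrix.isUnit_iff_isUnit_det, Matrix.det_smul, isUnit_iff_ne_zero]
    exact mul_ne_zero (pow_ne_zero _ h0)
      (isUnit_iff_ne_zero.mp ((Matrix.isUnit_iff_isUnit_det _).mp hu))

lemma commute_inv_right {X M : Matrix (Fin n) (Fin n) ℂ} (hM : IsUnit M)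
    (h : Commute X M) : Commute X M⁻¹ := by
  have hd : IsUnit M.det := (Matrix.isUnit_iff_isUnit_det M).mp hM
  have h1 : M * M⁻¹ = 1 := Matrix.mul_nonsing_inv M hd
  have h2 : M⁻¹ * M = 1 := Matrix.nonsing_inv_mul M hd
  unfold Commute SemiconjBy at h ⊢
  calc X * M⁻¹ = M⁻¹ * (M * X) * M⁻¹ := by rw [← mul_assoc, h2, one_mul]
  _ = M⁻¹ * (X * M) * M⁻¹ := by rw [h]
  _ = M⁻¹ * X * (M * M⁻¹) := by simp [mul_assoc]
  _ = M⁻¹ * X := by rw [h1, mul_one]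

lemma comm_sub_qinv (hA : ∀ μ ∈ spectrum ℂ A, ‖μ‖ < 1) (a : ℂ) {b : ℂ} (hb : ‖b‖ < 1) :
    Commute (A - a • 1) (q A b)⁻¹ :=
  commute_inv_right (isUnit_q A hA hb) (comm_sub_q A a b)

lemma comm_qinv_qinv (hA : ∀ μ ∈ spectrum ℂ A, ‖μ‖ < 1) {a b : ℂ} (ha : ‖a‖ < 1) (hb : ‖b‖ < 1) :
    Commute (q A a)⁻¹ (q A b)⁻¹ :=
  commute_inv_right (isUnit_q A hA hb)
    ((commute_inv_right (isUnit_q A hA ha) (comm_q_q A b a)).symm)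

lemma comm_c_c (hA : ∀ μ ∈ spectrum ℂ A, ‖μ‖ < 1) {a b : ℂ} (ha : ‖a‖ < 1) (hb : ‖b‖ < 1) :
    Commute (c A a) (c A b) := by
  unfold c
  exact ((comm_sub_sub A a b).mul_right (comm_sub_qinv A hA a hb)).mul_left
    (((comm_sub_qinv A hA b ha).symm).mul_right (comm_qinv_qinv A hA ha hb))

end BlaschkeAux

namespace BlaschkeAux
variable {n : ℕ} (A : Matrix (Fin n) (Fin n) ℂ)

lemma qq_sub_identity (a : ℂ) :
    (q A a)ᴴ * (q A a) - (A - a • 1)ᴴ * (A - a • 1)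
      = (1 - (starRingEnd ℂ) a * a) • (1 - Aᴴ * A) := by
  simp only [q, conjTranspose_sub, conjTranspose_smul, conjTranspose_one, starRingEnd_apply,
    star_star, mul_sub, sub_mul, smul_mul_assoc, mul_smul_comm, smul_smul, mul_one, one_mul]
  module

lemma scalar_real (a : ℂ) : 1 - (starRingEnd ℂ) a * a = (((1 - ‖a‖^2 : ℝ)) : ℂ) := by
  have : (starRingEnd ℂ) a * a = ((‖a‖^2 : ℝ) : ℂ) := by
    rw [mul_comm, Complex.mul_conj]
    norm_cast
    simp [Complex.normSq_eq_norm_sq]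
  rw [this]
  push_cast
  ring

lemma one_sub_cHc (hA : ∀ μ ∈ spectrum ℂ A, ‖μ‖ < 1) {a : ℂ} (ha : ‖a‖ < 1) :
    1 - (c A a)ᴴ * c A a
      = (1 - (starRingEnd ℂ) a * a) •
        (((q A a)⁻¹)ᴴ * ((1 - Aᴴ * A) * (q A a)⁻¹)) := by
  have hd : IsUnit (q A a).det := (Matrix.isUnit_iff_isUnit_det _).mp (isUnit_q A hA ha)
  have hW : q A a * (q A a)⁻¹ = 1 := Matrix.mul_nonsing_inv _ hd
  have hWH : ((q A a)⁻¹)ᴴ * (q A a)ᴴ = 1 := by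
    rw [← conjTranspose_mul, hW, conjTranspose_one]
  have e1 : (c A a)ᴴ * c A a
      = ((q A a)⁻¹)ᴴ * ((A - a • 1)ᴴ * (A - a • 1) * (q A a)⁻¹) := by
    simp [c, conjTranspose_mul, mul_assoc]
  have e2 : ((q A a)⁻¹)ᴴ * ((q A a)ᴴ * (q A a) * (q A a)⁻¹) = 1 := by
    rw [mul_assoc ((q A a)ᴴ), hW, mul_one, hWH]
  have key : 1 - (c A a)ᴴ * c A a
      = ((q A a)⁻¹)ᴴ * (((q A a)ᴴ * (q A a) - (A - a • 1)ᴴ * (A - a • 1)) * (q A a)⁻¹) := by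
    rw [sub_mul, mul_sub, e2, ← e1]
  rw [key, qq_sub_identity, smul_mul_assoc, mul_smul_comm]

lemma psd_smul_real {r : ℝ} (hr : 0 ≤ r) {M : Matrix (Fin n) (Fin n) ℂ}
    (hM : M.PosSemidef) : (((r : ℂ)) • M).PosSemidef := by
  refine .of_dotProduct_mulVec_nonneg ?_ (fun x => ?_)
  · unfold Matrix.IsHermitian
    rw [conjTranspose_smul, hM.1.eq]
    congr 1
    exact Complex.conj_ofReal r
  · rw [Matrix.smul_mulVec, dotProduct_smul]
    have := hM.dotProduct_mulVec_nonneg x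
    rw [smul_eq_mul]
    exact mul_nonneg (by exact_mod_cast Complex.zero_le_real.mpr hr) this

lemma psd_form_zero {M : Matrix (Fin n) (Fin n) ℂ} (hM : M.PosSemidef)
    {v : Fin n → ℂ} (h : star v ⬝ᵥ M.mulVec v = 0) : M.mulVec v = 0 := by
  obtain ⟨B, rfl⟩ : ∃ B : Matrix (Fin n) (Fin n) ℂ, M = Bᴴ * B := by
    open MatrixOrder in exact CStarAlgebra.nonneg_iff_eq_star_mul_self.mp hM.nonneg
  have h2 : star (B *ᵥ v) ⬝ᵥ (B *ᵥ v) = 0 := by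
    rw [Matrix.star_mulVec, ← Matrix.dotProduct_mulVec, Matrix.mulVec_mulVec, h]
  have h3 : B *ᵥ v = 0 := dotProduct_star_self_eq_zero.mp h2
  rw [← Matrix.mulVec_mulVec, h3, Matrix.mulVec_zero]

end BlaschkeAux

namespace BlaschkeAux
variable {n : ℕ} (A : Matrix (Fin n) (Fin n) ℂ)

noncomputable def Pm (L : List ℂ) : Matrix (Fin n) (Fin n) ℂ := (L.map (c A)).prod
noncomputable def Qm (L : List ℂ) : Matrix (Fin n) (Fin n) ℂ := (L.map (q A)).prod
noncomputable def PPm (L : List ℂ) : Matrix (Fin n) (Fin n) ℂ :=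
  (L.map (fun x => A - x • 1)).prod

@[simp] lemma Pm_nil : Pm A [] = 1 := rfl
@[simp] lemma Qm_nil : Qm A [] = 1 := rfl
@[simp] lemma PPm_nil : PPm A [] = 1 := rfl
lemma Pm_cons (a : ℂ) (L : List ℂ) : Pm A (a :: L) = c A a * Pm A L := by
  simp [Pm]
lemma Qm_cons (a : ℂ) (L : List ℂ) : Qm A (a :: L) = q A a * Qm A L := by
  simp [Qm]
lemma PPm_cons (a : ℂ) (L : List ℂ) : PPm A (a :: L) = (A - a • 1) * PPm A L := by
  simp [PPm]
lemma Qm_append (L1 L2 : List ℂ) : Qm A (L1 ++ L2) = Qm A L1 * Qm A L2 := by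
  simp [Qm]

lemma isUnit_Qm (hA : ∀ μ ∈ spectrum ℂ A, ‖μ‖ < 1) {L : List ℂ}
    (hL : ∀ x ∈ L, ‖x‖ < 1) : IsUnit (Qm A L) := by
  refine List.prod_isUnit fun m hm => ?_
  obtain ⟨x, hx, rfl⟩ := List.mem_map.mp hm
  exact isUnit_q A hA (hL x hx)

lemma comm_c_Pm (hA : ∀ μ ∈ spectrum ℂ A, ‖μ‖ < 1) {a : ℂ} (ha : ‖a‖ < 1)
    {L : List ℂ} (hL : ∀ x ∈ L, ‖x‖ < 1) : Commute (c A a) (Pm A L) := by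
  refine Commute.list_prod_right _ _ fun x hx => ?_
  obtain ⟨b, hb, rfl⟩ := List.mem_map.mp hx
  exact comm_c_c A hA ha (hL b hb)

lemma comm_q_c (hA : ∀ μ ∈ spectrum ℂ A, ‖μ‖ < 1) (a : ℂ) {b : ℂ} (hb : ‖b‖ < 1) :
    Commute (q A a) (c A b) :=
  (comm_sub_q A b a).symm.mul_right
    (commute_inv_right (isUnit_q A hA hb) (comm_q_q A a b))

lemma comm_q_Pm (hA : ∀ μ ∈ spectrum ℂ A, ‖μ‖ < 1) (a : ℂ)
    {L : List ℂ} (hL : ∀ x ∈ L, ‖x‖ < 1) : Commute (q A a) (Pm A L) := by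
  refine Commute.list_prod_right _ _ fun x hx => ?_
  obtain ⟨b, hb, rfl⟩ := List.mem_map.mp hx
  exact comm_q_c A hA a (hL b hb)

lemma comm_q_PPm (a : ℂ) (L : List ℂ) : Commute (q A a) (PPm A L) := by
  refine Commute.list_prod_right _ _ fun x hx => ?_
  obtain ⟨b, hb, rfl⟩ := List.mem_map.mp hx
  exact (comm_sub_q A b a).symm

lemma Pm_mul_Qm (hA : ∀ μ ∈ spectrum ℂ A, ‖μ‖ < 1) :
    ∀ (L : List ℂ), (∀ x ∈ L, ‖x‖ < 1) → Pm A L * Qm A L = PPm A L := by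
  intro L
  induction L with
  | nil => simp
  | cons b L ih =>
    intro hL
    have hb : ‖b‖ < 1 := hL b List.mem_cons_self
    have hL' : ∀ x ∈ L, ‖x‖ < 1 := fun x hx => hL x (List.mem_cons_of_mem b hx)
    have hcomm : Commute (q A b) (Pm A L) := comm_q_Pm A hA b hL'
    have hq : (q A b)⁻¹ * q A b = 1 :=
      Matrix.nonsing_inv_mul _ ((Matrix.isUnit_iff_isUnit_det _).mp (isUnit_q A hA hb))
    rw [Pm_cons, Qm_cons, PPm_cons, ← ih hL']
    unfold c
    calc (A - b • 1) * (q A b)⁻¹ * Pm A L * (q A b * Qm A L)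
        = (A - b • 1) * (q A b)⁻¹ * (Pm A L * q A b) * Qm A L := by
          simp only [mul_assoc]
      _ = (A - b • 1) * (q A b)⁻¹ * (q A b * Pm A L) * Qm A L := by rw [← hcomm.eq]
      _ = (A - b • 1) * ((q A b)⁻¹ * q A b) * (Pm A L * Qm A L) := by
          simp only [mul_assoc]
      _ = (A - b • 1) * (Pm A L * Qm A L) := by rw [hq, mul_one]

end BlaschkeAux

namespace BlaschkeAux
variable {n : ℕ} (A : Matrix (Fin n) (Fin n) ℂ)

lemma decomp1 (X Y : Matrix (Fin n) (Fin n) ℂ) :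
    1 - Yᴴ * (Xᴴ * X) * Y = Yᴴ * (1 - Xᴴ * X) * Y + (1 - Yᴴ * Y) := by
  noncomm_ring

lemma psd_one_sub_cHc (hA_contr : (1 - Aᴴ * A).PosSemidef)
    (hA : ∀ μ ∈ spectrum ℂ A, ‖μ‖ < 1) {a : ℂ} (ha : ‖a‖ < 1) :
    (1 - (c A a)ᴴ * c A a).PosSemidef := by
  rw [one_sub_cHc A hA ha, scalar_real]
  apply psd_smul_real
  · nlinarith [norm_nonneg a]
  · have := hA_contr.conjTranspose_mul_mul_same (B := (q A a)⁻¹)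
    rwa [mul_assoc] at this

lemma psd_one_sub_Pm (hA_contr : (1 - Aᴴ * A).PosSemidef)
    (hA : ∀ μ ∈ spectrum ℂ A, ‖μ‖ < 1) :
    ∀ (L : List ℂ), (∀ x ∈ L, ‖x‖ < 1) → (1 - (Pm A L)ᴴ * Pm A L).PosSemidef := by
  intro L
  induction L with
  | nil => simpa using Matrix.PosSemidef.zero
  | cons a L ih =>
    intro hL
    have ha : ‖a‖ < 1 := hL a List.mem_cons_self
    have hL' : ∀ x ∈ L, ‖x‖ < 1 := fun x hx => hL x (List.mem_cons_of_mem a hx)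
    have key : 1 - (Pm A (a :: L))ᴴ * Pm A (a :: L)
        = (Pm A L)ᴴ * (1 - (c A a)ᴴ * c A a) * Pm A L + (1 - (Pm A L)ᴴ * Pm A L) := by
      rw [Pm_cons, conjTranspose_mul, ← decomp1]
      noncomm_ring
    rw [key]
    exact Matrix.PosSemidef.add
      ((psd_one_sub_cHc A hA_contr hA ha).conjTranspose_mul_mul_same _) (ih hL')

def KerCond : List ℂ → (Fin n → ℂ) → Prop
  | [], _ => True
  | a :: L, v => ((1 - Aᴴ * A) *ᵥ ((q A a)⁻¹ *ᵥ v) = 0) ∧ KerCond L (c A a *ᵥ v)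

lemma ker_of_form_zero (hA_contr : (1 - Aᴴ * A).PosSemidef)
    (hA : ∀ μ ∈ spectrum ℂ A, ‖μ‖ < 1) :
    ∀ (L : List ℂ), (∀ x ∈ L, ‖x‖ < 1) → ∀ (v : Fin n → ℂ),
      star v ⬝ᵥ (1 - (Pm A L)ᴴ * Pm A L) *ᵥ v = 0 → KerCond A L v := by
  intro L
  induction L with
  | nil => intro _ v _; trivial
  | cons a L ih =>
    intro hL v hv
    have ha : ‖a‖ < 1 := hL a List.mem_cons_self
    have hL' : ∀ x ∈ L, ‖x‖ < 1 := fun x hx => hL x (List.mem_cons_of_mem a hx)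
    -- decomposition with c a on the inside
    have hPcomm : Pm A (a :: L) = Pm A L * c A a := by
      rw [Pm_cons, (comm_c_Pm A hA ha hL').eq]
    have key : 1 - (Pm A (a :: L))ᴴ * Pm A (a :: L)
        = (c A a)ᴴ * (1 - (Pm A L)ᴴ * Pm A L) * c A a + (1 - (c A a)ᴴ * c A a) := by
      rw [hPcomm, conjTranspose_mul, ← decomp1]
      noncomm_ring
    have form_split : star (c A a *ᵥ v) ⬝ᵥ (1 - (Pm A L)ᴴ * Pm A L) *ᵥ (c A a *ᵥ v)
          + star v ⬝ᵥ (1 - (c A a)ᴴ * c A a) *ᵥ v = 0 := by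
      rw [← hv, key, Matrix.add_mulVec, dotProduct_add]
      congr 1
      rw [← Matrix.mulVec_mulVec, ← Matrix.mulVec_mulVec, Matrix.dotProduct_mulVec (star v),
        ← Matrix.star_mulVec]
    have h1 : (0:ℂ) ≤ star (c A a *ᵥ v) ⬝ᵥ (1 - (Pm A L)ᴴ * Pm A L) *ᵥ (c A a *ᵥ v) :=
      (psd_one_sub_Pm A hA_contr hA L hL').dotProduct_mulVec_nonneg _
    have h2 : (0:ℂ) ≤ star v ⬝ᵥ (1 - (c A a)ᴴ * c A a) *ᵥ v :=
      (psd_one_sub_cHc A hA_contr hA ha).dotProduct_mulVec_nonneg _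
    have e1 : star (c A a *ᵥ v) ⬝ᵥ (1 - (Pm A L)ᴴ * Pm A L) *ᵥ (c A a *ᵥ v) = 0 := by
      refine le_antisymm ?_ h1
      rw [eq_neg_of_add_eq_zero_left form_split]
      exact neg_nonpos_of_nonneg h2
    have e2 : star v ⬝ᵥ (1 - (c A a)ᴴ * c A a) *ᵥ v = 0 := by
      refine le_antisymm ?_ h2
      rw [eq_neg_of_add_eq_zero_right form_split]
      exact neg_nonpos_of_nonneg h1
    refine ⟨?_, ih hL' _ e1⟩
    rw [one_sub_cHc A hA ha, scalar_real] at e2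
    have hs : ((1 - ‖a‖ ^ 2 : ℝ) : ℂ) ≠ 0 := by
      have h' : (0:ℝ) < 1 - ‖a‖^2 := by nlinarith [norm_nonneg a]
      exact_mod_cast ne_of_gt (Complex.zero_lt_real.mpr h')
    have key2 : star v ⬝ᵥ (((1 - ‖a‖ ^ 2 : ℝ) : ℂ) • ((q A a)⁻¹ᴴ * ((1 - Aᴴ * A) * (q A a)⁻¹))) *ᵥ v
        = ((1 - ‖a‖ ^ 2 : ℝ) : ℂ) * (star ((q A a)⁻¹ *ᵥ v) ⬝ᵥ (1 - Aᴴ * A) *ᵥ ((q A a)⁻¹ *ᵥ v)) := by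
      rw [Matrix.smul_mulVec, dotProduct_smul, smul_eq_mul, ← Matrix.mulVec_mulVec,
        ← Matrix.mulVec_mulVec, Matrix.dotProduct_mulVec (star v), ← Matrix.star_mulVec]
    rw [key2] at e2
    exact psd_form_zero hA_contr ((mul_eq_zero.mp e2).resolve_left hs)
end BlaschkeAux
namespace BlaschkeAux
variable {n : ℕ} (A : Matrix (Fin n) (Fin n) ℂ)

lemma ker_extract (hA : ∀ μ ∈ spectrum ℂ A, ‖μ‖ < 1) :
    ∀ (pre : List ℂ) (a : ℂ) (post : List ℂ),
      (∀ x ∈ pre ++ a :: post, ‖x‖ < 1) → ∀ (v : Fin n → ℂ),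
      KerCond A (pre ++ a :: post) v →
      (1 - Aᴴ * A) *ᵥ (((q A a)⁻¹ * Pm A pre) *ᵥ v) = 0 := by
  intro pre
  induction pre with
  | nil =>
    intro a post hL v hk
    simpa using hk.1
  | cons b pre' ih =>
    intro a post hL v hk
    have hb : ‖b‖ < 1 := hL b (by simp)
    have hpre' : ∀ x ∈ pre' ++ a :: post, ‖x‖ < 1 := fun x hx => by
      exact hL x (by simp [hx])
    have hnorms : ∀ x ∈ pre', ‖x‖ < 1 := fun x hx =>
      hpre' x (List.mem_append_left _ hx)
    have h1 := ih a post hpre' (c A b *ᵥ v) hk.2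
    rw [Matrix.mulVec_mulVec, Matrix.mulVec_mulVec] at h1
    have h2 : (q A a)⁻¹ * Pm A (b :: pre') = (q A a)⁻¹ * Pm A pre' * c A b := by
      rw [Pm_cons, (comm_c_Pm A hA hb hnorms).eq, ← mul_assoc]
    rw [Matrix.mulVec_mulVec, h2, ← mul_assoc]
    exact h1

lemma z_op_eq (hA : ∀ μ ∈ spectrum ℂ A, ‖μ‖ < 1)
    (pre : List ℂ) (a : ℂ) (post : List ℂ)
    (hL : ∀ x ∈ pre ++ a :: post, ‖x‖ < 1) :
    (q A a)⁻¹ * Pm A pre = (PPm A pre * Qm A post) * (Qm A (pre ++ a :: post))⁻¹ := by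
  have ha : ‖a‖ < 1 := hL a (by simp)
  have hpre : ∀ x ∈ pre, ‖x‖ < 1 := fun x hx => hL x (List.mem_append_left _ hx)
  have hpost : ∀ x ∈ post, ‖x‖ < 1 := fun x hx => hL x (by simp [hx])
  have hU : IsUnit (Qm A (pre ++ a :: post)) := isUnit_Qm A hA hL
  have hUd : IsUnit (Qm A (pre ++ a :: post)).det := (Matrix.isUnit_iff_isUnit_det _).mp hU
  have hqd : IsUnit (q A a).det := (Matrix.isUnit_iff_isUnit_det _).mp (isUnit_q A hA ha)
  have key : ((q A a)⁻¹ * Pm A pre) * Qm A (pre ++ a :: post) = PPm A pre * Qm A post := by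
    rw [Qm_append, Qm_cons]
    calc (q A a)⁻¹ * Pm A pre * (Qm A pre * (q A a * Qm A post))
        = (q A a)⁻¹ * (Pm A pre * Qm A pre) * (q A a * Qm A post) := by
          simp only [mul_assoc]
      _ = (q A a)⁻¹ * PPm A pre * (q A a * Qm A post) := by
          rw [Pm_mul_Qm A hA pre hpre]
      _ = (q A a)⁻¹ * (PPm A pre * q A a) * Qm A post := by simp only [mul_assoc]
      _ = (q A a)⁻¹ * (q A a * PPm A pre) * Qm A post := by
          rw [(comm_q_PPm A a pre).eq]
      _ = ((q A a)⁻¹ * q A a) * PPm A pre * Qm A post := by simp only [mul_assoc]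
      _ = PPm A pre * Qm A post := by
          rw [Matrix.nonsing_inv_mul _ hqd, one_mul]
  calc (q A a)⁻¹ * Pm A pre
      = (q A a)⁻¹ * Pm A pre * (Qm A (pre ++ a :: post) * (Qm A (pre ++ a :: post))⁻¹) := by
        rw [Matrix.mul_nonsing_inv _ hUd, mul_one]
    _ = (((q A a)⁻¹ * Pm A pre) * Qm A (pre ++ a :: post)) * (Qm A (pre ++ a :: post))⁻¹ := by
        simp only [mul_assoc]
    _ = (PPm A pre * Qm A post) * (Qm A (pre ++ a :: post))⁻¹ := by rw [key]

end BlaschkeAux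

namespace BlaschkeAux
open Polynomial
variable {n : ℕ} (A : Matrix (Fin n) (Fin n) ℂ)

noncomputable def PP (L : List ℂ) : Polynomial ℂ := (L.map (fun x => X - C x)).prod
noncomputable def QQ (L : List ℂ) : Polynomial ℂ :=
  (L.map (fun x => 1 - C ((starRingEnd ℂ) x) * X)).prod

@[simp] lemma PP_nil : PP [] = 1 := rfl
@[simp] lemma QQ_nil : QQ [] = 1 := rfl
lemma PP_cons (a : ℂ) (L : List ℂ) : PP (a :: L) = (X - C a) * PP L := by simp [PP]
lemma QQ_cons (a : ℂ) (L : List ℂ) :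
    QQ (a :: L) = (1 - C ((starRingEnd ℂ) a) * X) * QQ L := by simp [QQ]

lemma aeval_PP (L : List ℂ) : aeval A (PP L) = PPm A L := by
  induction L with
  | nil => simp
  | cons a L ih =>
    rw [PP_cons, PPm_cons, _root_.map_mul, ih]
    congr 1
    rw [map_sub, aeval_X, aeval_C, Algebra.algebraMap_eq_smul_one]

lemma aeval_QQ (L : List ℂ) : aeval A (QQ L) = Qm A L := by
  induction L with
  | nil => simp
  | cons a L ih =>
    rw [QQ_cons, Qm_cons, _root_.map_mul, ih]
    congr 1
    rw [map_sub, _root_.map_one, _root_.map_mul, aeval_X, aeval_C, q, Algebra.smul_def]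

lemma degree_QQ_le (L : List ℂ) : (QQ L).degree ≤ (L.length : ℕ) := by
  induction L with
  | nil => simp
  | cons a L ih =>
    rw [QQ_cons]
    refine le_trans (degree_mul_le _ _) ?_
    have h1 : (1 - C ((starRingEnd ℂ) a) * X).degree ≤ 1 := by
      refine le_trans (degree_sub_le _ _) ?_
      simp only [degree_one, max_le_iff]
      constructor
      · exact le_trans (by norm_num) (by norm_num : (0:WithBot ℕ) ≤ 1)
      · refine le_trans (degree_mul_le _ _) ?_
        rw [degree_X]
        have := degree_C_le (a := (starRingEnd ℂ) a)
        calc (C ((starRingEnd ℂ) a)).degree + 1 ≤ 0 + 1 := add_le_add_left this 1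
          _ = 1 := by norm_num
    calc (1 - C ((starRingEnd ℂ) a) * X).degree + (QQ L).degree
        ≤ 1 + (L.length : ℕ) := add_le_add h1 ih
      _ = ((L.length + 1 : ℕ) : WithBot ℕ) := by push_cast; ring
      _ = (((a :: L).length : ℕ) : WithBot ℕ) := by simp [add_comm]

lemma eval_QQ_ne_zero {L : List ℂ} (hL : ∀ x ∈ L, ‖x‖ < 1) {a : ℂ} (ha : ‖a‖ < 1) :
    (QQ L).eval a ≠ 0 := by
  induction L with
  | nil => simp
  | cons b L ih =>
    have hb : ‖b‖ < 1 := hL b (by simp)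
    have hL' : ∀ x ∈ L, ‖x‖ < 1 := fun x hx => hL x (by simp [hx])
    rw [QQ_cons, eval_mul]
    refine mul_ne_zero ?_ (ih hL')
    simp only [eval_sub, eval_one, eval_mul, eval_C, eval_X]
    intro hcontra
    have : (starRingEnd ℂ) b * a = 1 := by linear_combination -hcontra
    have hnorm : ‖(starRingEnd ℂ) b * a‖ = 1 := by rw [this, norm_one]
    rw [norm_mul, RCLike.norm_conj] at hnorm
    nlinarith [norm_nonneg a, norm_nonneg b]

end BlaschkeAux

namespace BlaschkeAux
open Polynomial
variable {n : ℕ}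

noncomputable def SplitSet (L : List ℂ) : Set (Polynomial ℂ) :=
  {g | ∃ pre a post, L = pre ++ a :: post ∧ g = PP pre * QQ post}

lemma span_splits : ∀ (L : List ℂ), (∀ x ∈ L, ‖x‖ < 1) → ∀ f : Polynomial ℂ,
    f.degree < (L.length : ℕ) → f ∈ Submodule.span ℂ (SplitSet L) := by
  intro L
  induction L with
  | nil =>
    intro _ f hf
    have : f = 0 := by simpa using hf
    simp [this]
  | cons a L ih =>
    intro hL f hf
    have ha : ‖a‖ < 1 := hL a (by simp)
    have hL' : ∀ x ∈ L, ‖x‖ < 1 := fun x hx => hL x (by simp [hx])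
    have he : (QQ L).eval a ≠ 0 := eval_QQ_ne_zero hL' ha
    set c0 : ℂ := f.eval a / (QQ L).eval a with hc0
    set g : Polynomial ℂ := f - C c0 * QQ L with hg
    have hg_root : g.IsRoot a := by
      simp only [IsRoot, hg, eval_sub, eval_mul, eval_C, hc0]
      field_simp
      ring
    obtain ⟨h, hh⟩ := (dvd_iff_isRoot.mpr hg_root)
    have hgdeg : g.degree < ((L.length + 1 : ℕ) : WithBot ℕ) := by
      refine lt_of_le_of_lt (degree_sub_le _ _) (max_lt ?_ ?_)
      · simpa using hf
      · refine lt_of_le_of_lt (degree_mul_le _ _) ?_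
        calc (C c0).degree + (QQ L).degree ≤ 0 + (L.length : ℕ) :=
              add_le_add degree_C_le (degree_QQ_le L)
          _ = (L.length : ℕ) := by norm_num
          _ < ((L.length + 1 : ℕ) : WithBot ℕ) := by exact_mod_cast Nat.lt_succ_self _
    have hhspan : h ∈ Submodule.span ℂ (SplitSet L) := by
      by_cases hzero : h = 0
      · simp [hzero]
      · refine ih hL' h ?_
        have hdg : g.degree = 1 + h.degree := by
          rw [hh, degree_mul, degree_X_sub_C]
        rw [hdg] at hgdeg
        have h1 : h.degree + 1 < (L.length : ℕ) + 1 := by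
          rw [add_comm] at hgdeg
          calc h.degree + 1 < ((L.length + 1 : ℕ) : WithBot ℕ) := hgdeg
            _ = (L.length : ℕ) + 1 := by push_cast; ring
        exact lt_of_add_lt_add_right h1
    -- multiplication by (X - C a) maps span (SplitSet L) into span (SplitSet (a :: L))
    have hmul : ∀ p ∈ Submodule.span ℂ (SplitSet L),
        (X - C a) * p ∈ Submodule.span ℂ (SplitSet (a :: L)) := by
      intro p hp
      refine Submodule.span_induction ?_ ?_ ?_ ?_ hp
      · intro g' hg'
        obtain ⟨pre, b, post, rfl, rfl⟩ := hg'
        refine Submodule.subset_span ?_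
        exact ⟨a :: pre, b, post, by simp, by rw [PP_cons, mul_assoc]⟩
      · simp
      · intro p1 p2 _ _ h1 h2
        rw [mul_add]
        exact Submodule.add_mem _ h1 h2
      · intro r p1 _ h1
        rw [mul_smul_comm]
        exact Submodule.smul_mem _ r h1
    have hQQmem : QQ L ∈ Submodule.span ℂ (SplitSet (a :: L)) :=
      Submodule.subset_span ⟨[], a, L, by simp, by simp⟩
    have : f = c0 • QQ L + (X - C a) * h := by
      rw [← hh, smul_eq_C_mul, hg]
      ring
    rw [this]
    exact Submodule.add_mem _ (Submodule.smul_mem _ _ hQQmem) (hmul h hhspan)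

end BlaschkeAux

namespace BlaschkeAux
open Polynomial
variable {n : ℕ} (A : Matrix (Fin n) (Fin n) ℂ)

lemma monic_natDegree_zero {p : Polynomial ℂ} (hp : p.Monic) (h0 : p.natDegree = 0) :
    p = 1 := by
  have h1 : p = C (p.coeff 0) := eq_C_of_natDegree_le_zero (le_of_eq h0)
  have h2 : p.coeff 0 = 1 := by
    have := hp.leadingCoeff
    rwa [leadingCoeff, h0] at this
  rw [h1, h2, _root_.map_one]

lemma annihilate (hA : ∀ μ ∈ spectrum ℂ A, ‖μ‖ < 1) (d : ℕ) (y : Fin n → ℂ)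
    (hD : ∀ f : Polynomial ℂ, f.degree < (d : ℕ) → (1 - Aᴴ * A) *ᵥ ((aeval A f) *ᵥ y) = 0) :
    ∀ (m : ℕ) (qq : Polynomial ℂ), qq.Monic → qq.natDegree ≤ m → qq.natDegree ≤ d →
      (aeval A qq) *ᵥ y = 0 → y = 0 := by
  intro m
  induction m with
  | zero =>
    intro qq hmonic hm _ hann
    rw [monic_natDegree_zero hmonic (Nat.le_zero.mp hm), _root_.map_one, Matrix.one_mulVec] at hann
    exact hann
  | succ m ih =>
    intro qq hmonic hm hd hann
    by_cases h0 : qq.natDegree = 0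
    · rw [monic_natDegree_zero hmonic h0, _root_.map_one, Matrix.one_mulVec] at hann
      exact hann
    · have hdegpos : 0 < qq.degree := natDegree_pos_iff_degree_pos.mp (Nat.pos_of_ne_zero h0)
      obtain ⟨lam, hroot⟩ := Complex.exists_root hdegpos
      obtain ⟨s, hs⟩ := dvd_iff_isRoot.mpr hroot
      have hsmonic : s.Monic := (monic_X_sub_C lam).of_mul_monic_left (hs ▸ hmonic)
      have hdeg_eq : qq.natDegree = 1 + s.natDegree := by
        rw [hs, (monic_X_sub_C lam).natDegree_mul hsmonic, natDegree_X_sub_C]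
      obtain ⟨w, hw⟩ : ∃ w, w = (aeval A s) *ᵥ y := ⟨_, rfl⟩
      have hw_eq : (A - lam • 1) *ᵥ w = 0 := by
        have : aeval A qq = (A - lam • 1) * aeval A s := by
          rw [hs, _root_.map_mul, map_sub, aeval_X, aeval_C,
            Algebra.algebraMap_eq_smul_one]
        rw [hw, Matrix.mulVec_mulVec, ← this, hann]
      by_cases hw0 : w = 0
      · refine ih s hsmonic ?_ ?_ (hw ▸ hw0)
        · omega
        · omega
      · -- lam is an eigenvalue of A
        exfalso
        have hspec : lam ∈ spectrum ℂ A := by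
          rw [spectrum.mem_iff]
          intro hunit
          rw [Algebra.algebraMap_eq_smul_one] at hunit
          have hinj := Matrix.mulVec_injective_iff_isUnit.mpr hunit
          have : (lam • 1 - A) *ᵥ w = (lam • 1 - A) *ᵥ 0 := by
            rw [Matrix.mulVec_zero]
            have := congrArg Neg.neg hw_eq
            simpa [Matrix.sub_mulVec, neg_sub] using this
          exact hw0 (hinj this)
        have hlam : ‖lam‖ < 1 := hA lam hspec
        have hDw : (1 - Aᴴ * A) *ᵥ w = 0 := by
          rw [hw]
          refine hD s ?_
          have hsne : s ≠ 0 := hsmonic.ne_zero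
          rw [degree_eq_natDegree hsne]
          exact_mod_cast (by omega : s.natDegree < d)
        have hAAw : (Aᴴ * A) *ᵥ w = w := by
          have := hDw
          rw [Matrix.sub_mulVec, Matrix.one_mulVec, sub_eq_zero] at this
          exact this.symm
        have hAw : A *ᵥ w = lam • w := by
          rw [Matrix.sub_mulVec, sub_eq_zero] at hw_eq
          rw [hw_eq, Matrix.smul_mulVec, Matrix.one_mulVec]
        have hnorm : star w ⬝ᵥ w = (starRingEnd ℂ) lam * lam * (star w ⬝ᵥ w) := by
          calc star w ⬝ᵥ w = star w ⬝ᵥ (Aᴴ * A) *ᵥ w := by rw [hAAw]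
            _ = star (A *ᵥ w) ⬝ᵥ (A *ᵥ w) := by
                rw [Matrix.star_mulVec, ← Matrix.dotProduct_mulVec, Matrix.mulVec_mulVec]
            _ = star (lam • w) ⬝ᵥ (lam • w) := by rw [hAw]
            _ = (starRingEnd ℂ) lam * lam * (star w ⬝ᵥ w) := by
                rw [star_smul, smul_dotProduct, dotProduct_smul, smul_eq_mul, smul_eq_mul,
                  starRingEnd_apply]
                ring
        have hwdot : star w ⬝ᵥ w ≠ 0 := fun hz =>
          hw0 (dotProduct_star_self_eq_zero.mp hz)
        have hmod : (starRingEnd ℂ) lam * lam = 1 := by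
          have h2 : ((starRingEnd ℂ) lam * lam - 1) * (star w ⬝ᵥ w) = 0 := by
            linear_combination -hnorm
          rcases mul_eq_zero.mp h2 with h3 | h3
          · linear_combination h3
          · exact absurd h3 hwdot
        have hn1 : ‖lam‖ * ‖lam‖ = 1 := by
          have := congrArg norm hmod
          rwa [norm_mul, RCLike.norm_conj, norm_one] at this
        nlinarith [hlam, norm_nonneg lam]
end BlaschkeAux

namespace BlaschkeAux
open Polynomial
variable {n : ℕ} (A : Matrix (Fin n) (Fin n) ℂ)

theorem posdef_main (hA_contr : (1 - Aᴴ * A).PosSemidef)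
    (hA : ∀ μ ∈ spectrum ℂ A, ‖μ‖ < 1) {d : ℕ} (hd : n ≤ d)
    (L : List ℂ) (hLlen : L.length = d) (hL : ∀ x ∈ L, ‖x‖ < 1) :
    (1 - (Pm A L)ᴴ * Pm A L).PosDef := by
  refine .of_dotProduct_mulVec_pos (psd_one_sub_Pm A hA_contr hA L hL).1 (fun x hx => ?_)
  refine lt_of_le_of_ne ((psd_one_sub_Pm A hA_contr hA L hL).dotProduct_mulVec_nonneg x) (fun hform => ?_)
  exfalso
  apply hx
  have hker : KerCond A L x := ker_of_form_zero A hA_contr hA L hL x hform.symm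
  have hQu : IsUnit (Qm A L).det := (Matrix.isUnit_iff_isUnit_det _).mp (isUnit_Qm A hA hL)
  obtain ⟨y, hy⟩ : ∃ y, y = (Qm A L)⁻¹ *ᵥ x := ⟨_, rfl⟩
  -- generator conditions
  have hgen : ∀ g ∈ SplitSet L, (1 - Aᴴ * A) *ᵥ ((aeval A g) *ᵥ y) = 0 := by
    rintro g ⟨pre, a, post, hsplit, rfl⟩
    subst hsplit
    have h1 := ker_extract A hA pre a post hL x hker
    rw [z_op_eq A hA pre a post hL] at h1
    rw [_root_.map_mul, aeval_PP, aeval_QQ, hy, Matrix.mulVec_mulVec]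
    rw [Matrix.mulVec_mulVec] at h1 ⊢
    simp only [← Matrix.mul_assoc] at h1 ⊢
    exact h1
  have hfD : ∀ f : Polynomial ℂ, f.degree < (d : ℕ) →
      (1 - Aᴴ * A) *ᵥ ((aeval A f) *ᵥ y) = 0 := by
    intro f hf
    have hmem : f ∈ Submodule.span ℂ (SplitSet L) :=
      span_splits L hL f (by rw [hLlen]; exact hf)
    refine Submodule.span_induction hgen (by simp) ?_ ?_ hmem
    · intro p1 p2 _ _ h1 h2
      rw [map_add, Matrix.add_mulVec, Matrix.mulVec_add, h1, h2, add_zero]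
    · intro r p _ h1
      rw [_root_.map_smul, Matrix.smul_mulVec, Matrix.mulVec_smul, h1, smul_zero]
  have hy0 : y = 0 := by
    refine annihilate A hA d y hfD n (Matrix.charpoly A) (Matrix.charpoly_monic A) ?_ ?_ ?_
    · rw [Matrix.charpoly_natDegree_eq_dim, Fintype.card_fin]
    · rw [Matrix.charpoly_natDegree_eq_dim, Fintype.card_fin]; exact hd
    · rw [Matrix.aeval_self_charpoly, Matrix.zero_mulVec]
  have : x = Qm A L *ᵥ y := by
    rw [hy, Matrix.mulVec_mulVec, Matrix.mul_nonsing_inv _ hQu, Matrix.one_mulVec]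
  rw [this, hy0, Matrix.mulVec_zero]

end BlaschkeAux

open Matrix ComplexOrder

/-- `φ(A)` for the finite Blaschke product `φ` determined by the unimodular
constant `ζ` and the zeros `α 0, …, α (d-1)` in the open unit disc. -/
noncomputable def blaschkeMatrix {n d : ℕ} (ζ : ℂ) (α : Fin d → ℂ)
    (A : Matrix (Fin n) (Fin n) ℂ) : Matrix (Fin n) (Fin n) ℂ :=
  ζ • (List.ofFn fun k : Fin d =>
    (A - α k • 1) * (1 - (starRingEnd ℂ) (α k) • A)⁻¹).prod

/-- If `A` is an `n×n` stable contraction and `φ` is a finite Blaschke product of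
degree `d ≥ n`, then `1` is not an eigenvalue of `φ(A)ᴴ φ(A)`; equivalently
`I - φ(A)ᴴ φ(A)` is invertible, so the defect index of `φ(A)` equals `n`. -/
theorem stmt_10 {n d : ℕ}
    (A : Matrix (Fin n) (Fin n) ℂ)
    (hA_contr : (1 - Aᴴ * A).PosSemidef)
    (hA_stable : ∀ μ ∈ spectrum ℂ A, ‖μ‖ < 1)
    (ζ : ℂ) (hζ : ‖ζ‖ = 1) (α : Fin d → ℂ) (hα : ∀ k, ‖α k‖ < 1)
    (hd : n ≤ d) :
    (1 : ℂ) ∉ spectrum ℂ ((blaschkeMatrix ζ α A)ᴴ * blaschkeMatrix ζ α A) ∧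
    IsUnit (1 - (blaschkeMatrix ζ α A)ᴴ * blaschkeMatrix ζ α A) ∧
    (1 - (blaschkeMatrix ζ α A)ᴴ * blaschkeMatrix ζ α A).rank = n := by
  classical
  have hLlen : (List.ofFn α).length = d := by simp
  have hLmem : ∀ x ∈ List.ofFn α, ‖x‖ < 1 := by
    intro x hx
    rw [List.mem_ofFn] at hx
    obtain ⟨k, rfl⟩ := hx
    exact hα k
  have hPm : blaschkeMatrix ζ α A = ζ • BlaschkeAux.Pm A (List.ofFn α) := by
    unfold blaschkeMatrix BlaschkeAux.Pm
    congr 1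
    rw [List.map_ofFn]
    rfl
  have hζ1 : star ζ * ζ = 1 := by
    have h1 : (starRingEnd ℂ) ζ * ζ = ((‖ζ‖^2 : ℝ) : ℂ) := by
      rw [mul_comm, Complex.mul_conj]
      norm_cast
      simp [Complex.normSq_eq_norm_sq]
    rw [← starRingEnd_apply, h1, hζ]
    norm_num
  have hBB : (blaschkeMatrix ζ α A)ᴴ * blaschkeMatrix ζ α A
      = (BlaschkeAux.Pm A (List.ofFn α))ᴴ * BlaschkeAux.Pm A (List.ofFn α) := by
    rw [hPm, Matrix.conjTranspose_smul, Matrix.smul_mul, Matrix.mul_smul, smul_smul,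
      hζ1, one_smul]
  have hPD := BlaschkeAux.posdef_main A hA_contr hA_stable hd (List.ofFn α) hLlen hLmem
  have hUnit : IsUnit (1 - (blaschkeMatrix ζ α A)ᴴ * blaschkeMatrix ζ α A) := by
    rw [hBB]; exact hPD.isUnit
  refine ⟨?_, hUnit, ?_⟩
  · intro hmem
    rw [spectrum.mem_iff] at hmem
    apply hmem
    rwa [_root_.map_one]
  · rw [Matrix.rank_of_isUnit _ hUnit, Fintype.card_fin]
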